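/- Let R ≥ 1, ε₀ ∈ (0, 1/4), ξ ∈ ℝ^N, and let H : B_R → ℝ satisfy ‖H‖_{W¹_∞(B_R)} ≤ ε₀, i.e. |H(y)| ≤ ε₀ and |H(y) − H(z)| ≤ ε₀|y − z| for all y, z ∈ B_R. Define the Hanzawa map Φ(y) = (1 + R⁻¹H(y))y + ξ. Then |Φ(y) − Φ(z)| ≥ (1 − 2ε₀)|y − z| ≥ ½|y − z| for all y, z ∈ B_R; in particular Φ is injective on B_R. -/
import Mathlib


/-- **Injectivity of the Hanzawa transform.**
Let `R ≥ 1`, `ε₀ ∈ (0, 1/4)`, `ξ ∈ ℝ^N`, and let `H : B_R → ℝ` satisfy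
`‖H‖_{W¹_∞(B_R)} ≤ ε₀`, i.e. `|H(y)| ≤ ε₀` and `|H(y) − H(z)| ≤ ε₀ |y − z|` for all
`y, z ∈ B_R`.  Define the Hanzawa map `Φ(y) = (1 + R⁻¹ H(y)) y + ξ`.  Then
`|Φ(y) − Φ(z)| ≥ (1 − 2ε₀)|y − z| ≥ ½ |y − z|` for all `y, z ∈ B_R`; in particular
`Φ` is injective on `B_R`. -/
theorem hanzawa_transform_injective
    (N : ℕ) (R ε₀ : ℝ) (ξ : EuclideanSpace ℝ (Fin N))
    (H : EuclideanSpace ℝ (Fin N) → ℝ)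
    (hR : 1 ≤ R) (hε : ε₀ ∈ Set.Ioo (0 : ℝ) (1 / 4))
    (hbd : ∀ y ∈ Metric.ball (0 : EuclideanSpace ℝ (Fin N)) R, |H y| ≤ ε₀)
    (hlip : ∀ y ∈ Metric.ball (0 : EuclideanSpace ℝ (Fin N)) R,
      ∀ z ∈ Metric.ball (0 : EuclideanSpace ℝ (Fin N)) R,
        |H y - H z| ≤ ε₀ * ‖y - z‖) :
    (∀ y ∈ Metric.ball (0 : EuclideanSpace ℝ (Fin N)) R,
      ∀ z ∈ Metric.ball (0 : EuclideanSpace ℝ (Fin N)) R,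
        (1 - 2 * ε₀) * ‖y - z‖ ≤
            ‖((1 + R⁻¹ * H y) • y + ξ) - ((1 + R⁻¹ * H z) • z + ξ)‖ ∧
        (1 / 2) * ‖y - z‖ ≤ (1 - 2 * ε₀) * ‖y - z‖) ∧
    Set.InjOn (fun y => (1 + R⁻¹ * H y) • y + ξ)
      (Metric.ball (0 : EuclideanSpace ℝ (Fin N)) R) := by

  obtain ⟨hε0, hε4⟩ := hε
  have hRpos : (0:ℝ) < R := lt_of_lt_of_le one_pos hR
  have hRinv : R⁻¹ ≤ 1 := by
    rw [inv_le_one_iff₀]; right; exact hR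
  have key : ∀ y ∈ Metric.ball (0 : EuclideanSpace ℝ (Fin N)) R,
      ∀ z ∈ Metric.ball (0 : EuclideanSpace ℝ (Fin N)) R,
        (1 - 2 * ε₀) * ‖y - z‖ ≤
            ‖((1 + R⁻¹ * H y) • y + ξ) - ((1 + R⁻¹ * H z) • z + ξ)‖ := by
    intro y hy z hz
    have hz' : ‖z‖ < R := by simpa using hz
    have eq1 : ((1 + R⁻¹ * H y) • y + ξ) - ((1 + R⁻¹ * H z) • z + ξ)
        = (1 + R⁻¹ * H y) • (y - z) + (R⁻¹ * (H y - H z)) • z := by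
      module
    have hHy := abs_le.mp (hbd y hy)
    have h1 : (1 - ε₀) * ‖y - z‖ ≤ ‖(1 + R⁻¹ * H y) • (y - z)‖ := by
      rw [norm_smul, Real.norm_eq_abs]
      apply mul_le_mul_of_nonneg_right _ (norm_nonneg _)
      have hle : 1 - ε₀ ≤ 1 + R⁻¹ * H y := by
        nlinarith [inv_pos.mpr hRpos]
      exact le_trans hle (le_abs_self _)
    have h2 : ‖(R⁻¹ * (H y - H z)) • z‖ ≤ ε₀ * ‖y - z‖ := by
      rw [norm_smul, Real.norm_eq_abs, abs_mul, abs_inv, abs_of_pos hRpos]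
      have hl := hlip y hy z hz
      have habs : |H y - H z| ≥ 0 := abs_nonneg _
      have hzn : (0:ℝ) ≤ ‖z‖ := norm_nonneg _
      calc R⁻¹ * |H y - H z| * ‖z‖ ≤ R⁻¹ * (ε₀ * ‖y - z‖) * R := by
            apply mul_le_mul
            · exact mul_le_mul_of_nonneg_left hl (le_of_lt (inv_pos.mpr hRpos))
            · exact le_of_lt hz'
            · exact hzn
            · positivity
        _ = ε₀ * ‖y - z‖ := by field_simp
    have h3 : ‖(1 + R⁻¹ * H y) • (y - z)‖ - ‖(R⁻¹ * (H y - H z)) • z‖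
        ≤ ‖(1 + R⁻¹ * H y) • (y - z) + (R⁻¹ * (H y - H z)) • z‖ := by
      have := norm_add_le ((1 + R⁻¹ * H y) • (y - z) + (R⁻¹ * (H y - H z)) • z)
        (-((R⁻¹ * (H y - H z)) • z))
      simp only [add_neg_cancel_right, norm_neg] at this
      linarith
    rw [eq1]
    nlinarith [norm_nonneg (y - z)]
  constructor
  · intro y hy z hz
    refine ⟨key y hy z hz, ?_⟩
    nlinarith [norm_nonneg (y - z)]
  · intro y hy z hz heq
    simp only at heq
    have hk := key y hy z hz
    rw [heq] at hk
    simp only [sub_self, norm_zero] at hk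
    have : ‖y - z‖ ≤ 0 := by nlinarith [norm_nonneg (y - z)]
    have : y - z = 0 := by
      have := norm_nonneg (y - z); rw [← norm_eq_zero]; linarith
    exact sub_eq_zero.mp this
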